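/- If a positive semidefinite operator E on ℂ³ satisfies ⟨β_i| (E ⊗ I₃) |β_j⟩ = 0 for all i ≠ j, where {|β_j⟩} is the nine-state Bennett basis of ℂ³ ⊗ ℂ³ and E acts on the first factor, then E is proportional to the identity operator on ℂ³. -/

import Mathlib

noncomputable section
open Kronecker ComplexOrder

abbrev V3 : Type := EuclideanSpace ℂ (Fin 3)
abbrev V33 : Type := EuclideanSpace ℂ (Fin 3 × Fin 3)

def e3 (i : Fin 3) : V3 := EuclideanSpace.single i 1
def s2 : ℂ := Real.sqrt 2
def etaP : V3 := s2⁻¹ • (e3 0 + e3 1)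
def etaM : V3 := s2⁻¹ • (e3 0 - e3 1)
def xiP : V3 := s2⁻¹ • (e3 1 + e3 2)
def xiM : V3 := s2⁻¹ • (e3 1 - e3 2)

def tp2 (a b : V3) : V33 := WithLp.toLp 2 (fun p => a p.1 * b p.2)

/-- The nine-state Bennett product basis of `ℂ³ ⊗ ℂ³`. -/
def bennett : Fin 9 → V33 :=
  ![tp2 (e3 0) etaP, tp2 (e3 0) etaM, tp2 etaP (e3 2), tp2 etaM (e3 2),
    tp2 (e3 2) xiP, tp2 (e3 2) xiM, tp2 xiP (e3 0), tp2 xiM (e3 0),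
    tp2 (e3 1) (e3 1)]

lemma key (E : Matrix (Fin 3) (Fin 3) ℂ) (a b c d : V3) :
    (inner ℂ (tp2 a b) (Matrix.toEuclideanLin (E ⊗ₖ (1 : Matrix (Fin 3) (Fin 3) ℂ)) (tp2 c d)) : ℂ)
      = (inner ℂ a (Matrix.toEuclideanLin E c) : ℂ) * (inner ℂ b d : ℂ) := by
  simp only [Matrix.toEuclideanLin_apply, PiLp.inner_apply, RCLike.inner_apply,
    Matrix.mulVec, dotProduct, Fintype.sum_prod_type, tp2,
    Matrix.kroneckerMap_apply, Matrix.one_apply, PiLp.toLp_apply,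
    WithLp.ofLp_toLp, map_mul, mul_ite, ite_mul, mul_zero, zero_mul, mul_one, one_mul,
    Finset.sum_ite_eq, Finset.sum_ite_eq', Finset.mem_univ, if_true]
  rw [Finset.sum_mul_sum]
  congr 1; ext p; congr 1; ext r
  simp only [Finset.mul_sum, Finset.sum_mul]
  congr 1; ext q
  ring

lemma hs2 : s2 ≠ 0 := by
  simp only [s2, ne_eq, Complex.ofReal_eq_zero]
  positivity

lemma conj_s2 : (starRingEnd ℂ) s2 = s2 := by simp [s2]

lemma inner_e3 (E : Matrix (Fin 3) (Fin 3) ℂ) (i j : Fin 3) :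
    (inner ℂ (e3 i) (Matrix.toEuclideanLin E (e3 j)) : ℂ) = E i j := by
  simp [e3, Matrix.toEuclideanLin_apply, PiLp.inner_apply, RCLike.inner_apply,
    Matrix.mulVec, dotProduct, EuclideanSpace.single_apply, PiLp.toLp_apply,
    WithLp.ofLp_toLp, Fin.sum_univ_three]

lemma inner_etaP_e1 : (inner ℂ etaP (e3 1) : ℂ) = s2⁻¹ := by
  simp [etaP, e3, PiLp.inner_apply, RCLike.inner_apply, EuclideanSpace.single_apply,
    PiLp.smul_apply, PiLp.add_apply, smul_eq_mul, Fin.sum_univ_three, map_inv₀, conj_s2]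

lemma inner_xiP_e1 : (inner ℂ xiP (e3 1) : ℂ) = s2⁻¹ := by
  simp [xiP, e3, PiLp.inner_apply, RCLike.inner_apply, EuclideanSpace.single_apply,
    PiLp.smul_apply, PiLp.add_apply, smul_eq_mul, Fin.sum_univ_three, map_inv₀, conj_s2]

lemma inner_etaP_xiP : (inner ℂ etaP xiP : ℂ) = s2⁻¹ * s2⁻¹ := by
  simp [etaP, xiP, e3, PiLp.inner_apply, RCLike.inner_apply, EuclideanSpace.single_apply,
    PiLp.smul_apply, PiLp.add_apply, smul_eq_mul, Fin.sum_univ_three, map_inv₀, conj_s2]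

lemma inner_e3_self (i : Fin 3) : (inner ℂ (e3 i) (e3 i) : ℂ) = 1 := by
  simp [e3, PiLp.inner_apply, RCLike.inner_apply, EuclideanSpace.single_apply,
    Fin.sum_univ_three]

lemma inner_eta (E : Matrix (Fin 3) (Fin 3) ℂ) :
    (inner ℂ etaP (Matrix.toEuclideanLin E etaM) : ℂ)
      = s2⁻¹ * s2⁻¹ * (E 0 0 - E 0 1 + E 1 0 - E 1 1) := by
  simp [etaP, etaM, e3, Matrix.toEuclideanLin_apply, PiLp.inner_apply, RCLike.inner_apply,
    Matrix.mulVec, dotProduct, EuclideanSpace.single_apply, PiLp.smul_apply,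
    PiLp.add_apply, PiLp.sub_apply, smul_eq_mul, PiLp.toLp_apply,
    WithLp.ofLp_toLp, Fin.sum_univ_three, map_inv₀, conj_s2]
  ring

lemma inner_xi (E : Matrix (Fin 3) (Fin 3) ℂ) :
    (inner ℂ xiP (Matrix.toEuclideanLin E xiM) : ℂ)
      = s2⁻¹ * s2⁻¹ * (E 1 1 - E 1 2 + E 2 1 - E 2 2) := by
  simp [xiP, xiM, e3, Matrix.toEuclideanLin_apply, PiLp.inner_apply, RCLike.inner_apply,
    Matrix.mulVec, dotProduct, EuclideanSpace.single_apply, PiLp.smul_apply,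
    PiLp.add_apply, PiLp.sub_apply, smul_eq_mul, PiLp.toLp_apply,
    WithLp.ofLp_toLp, Fin.sum_univ_three, map_inv₀, conj_s2]
  ring

/-- a positive semidefinite operator `E` on `ℂ³` acting on the first factor
that preserves the orthogonality of the Bennett basis is proportional to the identity. -/
theorem bennett_OPM_trivial (E : Matrix (Fin 3) (Fin 3) ℂ) (hE : E.PosSemidef)
    (h : ∀ i j : Fin 9, i ≠ j →
      (inner ℂ (bennett i)
        (Matrix.toEuclideanLin (E ⊗ₖ (1 : Matrix (Fin 3) (Fin 3) ℂ)) (bennett j)) : ℂ) = 0) :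
    ∃ c : ℂ, E = c • (1 : Matrix (Fin 3) (Fin 3) ℂ) := by
  have hinv : (s2 : ℂ)⁻¹ ≠ 0 := inv_ne_zero hs2
  have hinv2 : (s2 : ℂ)⁻¹ * s2⁻¹ ≠ 0 := mul_ne_zero hinv hinv
  have h08 := h 0 8 (by decide)
  rw [show bennett 0 = tp2 (e3 0) etaP from rfl, show bennett 8 = tp2 (e3 1) (e3 1) from rfl,
    key, inner_e3, inner_etaP_e1] at h08
  have e01 : E 0 1 = 0 := by
    rcases mul_eq_zero.mp h08 with h' | h'
    · exact h'
    · exact absurd h' hinv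
  have h48 := h 4 8 (by decide)
  rw [show bennett 4 = tp2 (e3 2) xiP from rfl, show bennett 8 = tp2 (e3 1) (e3 1) from rfl,
    key, inner_e3, inner_xiP_e1] at h48
  have e21 : E 2 1 = 0 := by
    rcases mul_eq_zero.mp h48 with h' | h'
    · exact h'
    · exact absurd h' hinv
  have h04 := h 0 4 (by decide)
  rw [show bennett 0 = tp2 (e3 0) etaP from rfl, show bennett 4 = tp2 (e3 2) xiP from rfl,
    key, inner_e3, inner_etaP_xiP] at h04
  have e02 : E 0 2 = 0 := by
    rcases mul_eq_zero.mp h04 with h' | h'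
    · exact h'
    · exact absurd h' hinv2
  have h23 := h 2 3 (by decide)
  rw [show bennett 2 = tp2 etaP (e3 2) from rfl, show bennett 3 = tp2 etaM (e3 2) from rfl,
    key, inner_eta, inner_e3_self, mul_one] at h23
  have heq1 : E 0 0 - E 0 1 + E 1 0 - E 1 1 = 0 := by
    rcases mul_eq_zero.mp h23 with h' | h'
    · exact absurd h' hinv2
    · exact h'
  have h67 := h 6 7 (by decide)
  rw [show bennett 6 = tp2 xiP (e3 0) from rfl, show bennett 7 = tp2 xiM (e3 0) from rfl,
    key, inner_xi, inner_e3_self, mul_one] at h67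
  have heq2 : E 1 1 - E 1 2 + E 2 1 - E 2 2 = 0 := by
    rcases mul_eq_zero.mp h67 with h' | h'
    · exact absurd h' hinv2
    · exact h'
  have e10 : E 1 0 = 0 := by
    rw [← hE.1.apply 1 0, e01, star_zero]
  have e12 : E 1 2 = 0 := by
    rw [← hE.1.apply 1 2, e21, star_zero]
  have e20 : E 2 0 = 0 := by
    rw [← hE.1.apply 2 0, e02, star_zero]
  have e11 : E 1 1 = E 0 0 := by
    rw [e01, e10] at heq1; linear_combination -heq1
  have e22 : E 2 2 = E 0 0 := by
    rw [e12, e21] at heq2; linear_combination e11 - heq2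
  refine ⟨E 0 0, ?_⟩
  ext i j
  fin_cases i <;> fin_cases j <;>
    simp [Matrix.one_apply, e01, e02, e10, e12, e20, e21, e11, e22]
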